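/- If the lower convex hull of a finite point set P_L and the upper convex hull of a finite point set P_U in ℝ² intersect, then either some point of P_U lies in the lower convex hull of P_L, or some point of P_L lies in the upper convex hull of P_U. -/

import Mathlib

open scoped Pointwise
/-- The upper convex hull of a planar point set: the convex hull of the union of
downward vertical rays emanating from the points. -/
def uphull (P : Set (ℝ × ℝ)) : Set (ℝ × ℝ) :=
  convexHull ℝ {x : ℝ × ℝ | ∃ p ∈ P, ∃ t : ℝ, 0 ≤ t ∧ x = p - t • ((0 : ℝ), (1 : ℝ))}

/-- The lower convex hull: the convex hull of the union of upward vertical rays. -/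
def lowhull (P : Set (ℝ × ℝ)) : Set (ℝ × ℝ) :=
  convexHull ℝ {x : ℝ × ℝ | ∃ p ∈ P, ∃ t : ℝ, 0 ≤ t ∧ x = p + t • ((0 : ℝ), (1 : ℝ))}

lemma low_mem (P : Set (ℝ × ℝ)) (x : ℝ × ℝ) :
    x ∈ lowhull P ↔ ∃ u ∈ convexHull ℝ P, u.1 = x.1 ∧ u.2 ≤ x.2 := by
  constructor
  · intro hx
    have hsub : {x : ℝ × ℝ | ∃ p ∈ P, ∃ t : ℝ, 0 ≤ t ∧ x = p + t • ((0 : ℝ), (1 : ℝ))} ⊆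
        {x : ℝ × ℝ | ∃ u ∈ convexHull ℝ P, u.1 = x.1 ∧ u.2 ≤ x.2} := by
      rintro y ⟨p, hp, t, ht, rfl⟩
      exact ⟨p, subset_convexHull ℝ P hp, by simp, by simp [ht]⟩
    have hconv : Convex ℝ {x : ℝ × ℝ | ∃ u ∈ convexHull ℝ P, u.1 = x.1 ∧ u.2 ≤ x.2} := by
      rintro y ⟨uy, huy, hy1, hy2⟩ z ⟨uz, huz, hz1, hz2⟩ a b ha hb hab
      refine ⟨a • uy + b • uz, (convex_convexHull ℝ P) huy huz ha hb hab, by simp [hy1, hz1], ?_⟩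
      simp only [Prod.snd_add, Prod.smul_snd, smul_eq_mul]
      nlinarith
    exact convexHull_min hsub hconv hx
  · rintro ⟨u, hu, h1, h2⟩
    have hx : x = u + (x.2 - u.2) • ((0:ℝ), (1:ℝ)) := by
      ext <;> simp [h1] <;> ring
    have : x ∈ convexHull ℝ P + convexHull ℝ {(x.2 - u.2) • ((0:ℝ), (1:ℝ))} := by
      rw [convexHull_singleton]
      exact ⟨u, hu, _, rfl, hx.symm⟩
    rw [← convexHull_add] at this
    refine convexHull_mono ?_ this
    rintro y ⟨p, hp, c, hc, rfl⟩
    simp only [Set.mem_singleton_iff] at hc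
    exact ⟨p, hp, x.2 - u.2, by linarith, by rw [hc]⟩

lemma up_mem (P : Set (ℝ × ℝ)) (x : ℝ × ℝ) :
    x ∈ uphull P ↔ ∃ v ∈ convexHull ℝ P, v.1 = x.1 ∧ x.2 ≤ v.2 := by
  constructor
  · intro hx
    have hsub : {x : ℝ × ℝ | ∃ p ∈ P, ∃ t : ℝ, 0 ≤ t ∧ x = p - t • ((0 : ℝ), (1 : ℝ))} ⊆
        {x : ℝ × ℝ | ∃ v ∈ convexHull ℝ P, v.1 = x.1 ∧ x.2 ≤ v.2} := by
      rintro y ⟨p, hp, t, ht, rfl⟩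
      exact ⟨p, subset_convexHull ℝ P hp, by simp, by simp [ht]⟩
    have hconv : Convex ℝ {x : ℝ × ℝ | ∃ v ∈ convexHull ℝ P, v.1 = x.1 ∧ x.2 ≤ v.2} := by
      rintro y ⟨uy, huy, hy1, hy2⟩ z ⟨uz, huz, hz1, hz2⟩ a b ha hb hab
      refine ⟨a • uy + b • uz, (convex_convexHull ℝ P) huy huz ha hb hab, by simp [hy1, hz1], ?_⟩
      simp only [Prod.snd_add, Prod.smul_snd, smul_eq_mul]
      nlinarith
    exact convexHull_min hsub hconv hx
  · rintro ⟨u, hu, h1, h2⟩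
    have : x ∈ convexHull ℝ P + convexHull ℝ {-((u.2 - x.2) • ((0:ℝ), (1:ℝ)))} := by
      rw [convexHull_singleton]
      refine ⟨u, hu, _, rfl, ?_⟩
      ext
      · simp [h1]
      · simp
    rw [← convexHull_add] at this
    refine convexHull_mono ?_ this
    rintro y ⟨p, hp, c, hc, rfl⟩
    simp only [Set.mem_singleton_iff] at hc
    refine ⟨p, hp, u.2 - x.2, by linarith, ?_⟩
    rw [hc]
    ext
    · simp
    · simp; ring


noncomputable def lineY (a b : ℝ × ℝ) (x : ℝ) : ℝ :=
  a.2 + (x - a.1) * ((b.2 - a.2) / (b.1 - a.1))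

lemma line_mem (a b : ℝ × ℝ) (hab : a.1 < b.1) (x : ℝ) (h1 : a.1 ≤ x) (h2 : x ≤ b.1) :
    (x, lineY a b x) ∈ segment ℝ a b := by
  have hne : b.1 - a.1 ≠ 0 := by linarith
  refine ⟨1 - (x - a.1) / (b.1 - a.1), (x - a.1) / (b.1 - a.1), ?_, ?_, by ring, ?_⟩
  · have : (x - a.1) / (b.1 - a.1) ≤ 1 := by
      rw [div_le_one (by linarith)]; linarith
    linarith
  · exact div_nonneg (by linarith) (by linarith)
  · ext
    · simp only [Prod.fst_add, Prod.smul_fst, smul_eq_mul]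
      field_simp
      ring
    · simp only [Prod.snd_add, Prod.smul_snd, smul_eq_mul, lineY]
      field_simp
      ring

lemma seg_fst_bounds (a b w : ℝ × ℝ) (hab : a.1 ≤ b.1) (hw : w ∈ segment ℝ a b) :
    a.1 ≤ w.1 ∧ w.1 ≤ b.1 := by
  obtain ⟨σ, τ, hσ, hτ, hστ, heq⟩ := hw
  have h1 : w.1 = σ * a.1 + τ * b.1 := by rw [← heq]; simp
  have hσ1 : σ = 1 - τ := by linarith
  have h1' : w.1 - a.1 = τ * (b.1 - a.1) := by rw [h1, hσ1]; ring
  have h2' : b.1 - w.1 = σ * (b.1 - a.1) := by rw [h1, hσ1]; ring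
  constructor
  · nlinarith [mul_nonneg hτ (sub_nonneg.2 hab)]
  · nlinarith [mul_nonneg hσ (sub_nonneg.2 hab)]

lemma seg_snd_eq (a b w : ℝ × ℝ) (hab : a.1 < b.1) (hw : w ∈ segment ℝ a b) :
    w.2 = lineY a b w.1 := by
  obtain ⟨σ, τ, hσ, hτ, hστ, heq⟩ := hw
  have h1 : w.1 = σ * a.1 + τ * b.1 := by rw [← heq]; simp
  have h2 : w.2 = σ * a.2 + τ * b.2 := by rw [← heq]; simp
  have hne : b.1 - a.1 ≠ 0 := by linarith
  rw [lineY, h1, h2]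
  field_simp
  have hσ1 : σ = 1 - τ := by linarith
  rw [hσ1]; ring

lemma lineY_self (a b : ℝ × ℝ) : lineY a b a.1 = a.2 := by simp [lineY]

lemma lineY_other (a b : ℝ × ℝ) (hab : a.1 < b.1) : lineY a b b.1 = b.2 := by
  have hne : b.1 - a.1 ≠ 0 := by linarith
  rw [lineY]; field_simp; ring

lemma affine_endpoint (k e α β x : ℝ) (h1 : α ≤ x) (h2 : x ≤ β) (h : 0 ≤ k * x + e) :
    0 ≤ k * α + e ∨ 0 ≤ k * β + e := by
  rcases le_total 0 k with hk | hk
  · right; nlinarith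
  · left; nlinarith

lemma lineY_affine (a b : ℝ × ℝ) (x : ℝ) :
    lineY a b x = ((b.2 - a.2) / (b.1 - a.1)) * x + (a.2 - a.1 * ((b.2 - a.2) / (b.1 - a.1))) := by
  rw [lineY]; ring

lemma segB_sorted (a b c d w w' : ℝ × ℝ) (hab : a.1 ≤ b.1) (hcd : c.1 ≤ d.1)
    (hw : w ∈ segment ℝ a b) (hw' : w' ∈ segment ℝ c d)
    (hx : w.1 = w'.1) (hy : w.2 ≤ w'.2) :
    (∃ z ∈ segment ℝ a b, (z.1 = c.1 ∧ z.2 ≤ c.2) ∨ (z.1 = d.1 ∧ z.2 ≤ d.2)) ∨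
    (∃ z ∈ segment ℝ c d, (z.1 = a.1 ∧ a.2 ≤ z.2) ∨ (z.1 = b.1 ∧ b.2 ≤ z.2)) := by
  obtain ⟨hwa, hwb⟩ := seg_fst_bounds a b w hab hw
  obtain ⟨hwc, hwd⟩ := seg_fst_bounds c d w' hcd hw'
  rw [← hx] at hwc hwd
  rcases eq_or_lt_of_le hab with hab' | hab'
  · -- a.1 = b.1, so w.1 = a.1 = b.1
    have hwa1 : w.1 = a.1 := le_antisymm (hab' ▸ hwb) hwa
    obtain ⟨σ, τ, hσ, hτ, hστ, heq⟩ := hw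
    have h2 : w.2 = σ * a.2 + τ * b.2 := by rw [← heq]; simp
    have hσ1 : σ = 1 - τ := by linarith
    rcases le_total a.2 b.2 with h' | h'
    · refine Or.inr ⟨w', hw', Or.inl ⟨by rw [← hx, hwa1], ?_⟩⟩
      have e1 : w.2 - a.2 = τ * (b.2 - a.2) := by rw [h2, hσ1]; ring
      have := mul_nonneg hτ (sub_nonneg.2 h')
      linarith
    · refine Or.inr ⟨w', hw', Or.inr ⟨by rw [← hx, hwa1, hab'], ?_⟩⟩
      have e1 : w.2 - b.2 = σ * (a.2 - b.2) := by rw [h2, hσ1]; ring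
      have := mul_nonneg hσ (sub_nonneg.2 h')
      linarith
  rcases eq_or_lt_of_le hcd with hcd' | hcd'
  · have hwc1 : w.1 = c.1 := le_antisymm (hcd' ▸ hwd) hwc
    obtain ⟨σ, τ, hσ, hτ, hστ, heq⟩ := hw'
    have h2 : w'.2 = σ * c.2 + τ * d.2 := by rw [← heq]; simp
    have hσ1 : σ = 1 - τ := by linarith
    rcases le_total c.2 d.2 with h' | h'
    · refine Or.inl ⟨w, hw, Or.inr ⟨by rw [hwc1, hcd'], ?_⟩⟩
      have e1 : d.2 - w'.2 = σ * (d.2 - c.2) := by rw [h2, hσ1]; ring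
      have := mul_nonneg hσ (sub_nonneg.2 h')
      linarith
    · refine Or.inl ⟨w, hw, Or.inl ⟨hwc1, ?_⟩⟩
      have e1 : c.2 - w'.2 = τ * (c.2 - d.2) := by rw [h2, hσ1]; ring
      have := mul_nonneg hτ (sub_nonneg.2 h')
      linarith
  -- main case
  have hA := seg_snd_eq a b w hab' hw
  have hC := seg_snd_eq c d w' hcd' hw'
  set ka := (b.2 - a.2) / (b.1 - a.1) with hka
  set kc := (d.2 - c.2) / (d.1 - c.1) with hkc
  set k := kc - ka with hk
  set e := (c.2 - c.1 * kc) - (a.2 - a.1 * ka) with he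
  have hδ : ∀ x : ℝ, lineY c d x - lineY a b x = k * x + e := by
    intro x; rw [lineY_affine, lineY_affine, ← hka, ← hkc, hk, he]; ring
  have hδ0 : 0 ≤ k * w.1 + e := by
    rw [← hδ w.1, ← hA, hx, ← hC]; linarith
  rcases le_total a.1 c.1 with h1 | h1 <;> rcases le_total b.1 d.1 with h2 | h2
  · -- α = c.1, β = b.1
    rcases affine_endpoint k e c.1 b.1 w.1 hwc hwb hδ0 with hα | hβ
    · have : lineY a b c.1 ≤ c.2 := by
        have := hδ c.1; rw [lineY_self] at this; linarith
      exact Or.inl ⟨(c.1, lineY a b c.1), line_mem a b hab' c.1 h1 (le_trans hwc hwb),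
        Or.inl ⟨rfl, this⟩⟩
    · have : b.2 ≤ lineY c d b.1 := by
        have := hδ b.1; rw [lineY_other a b hab'] at this; linarith
      exact Or.inr ⟨(b.1, lineY c d b.1), line_mem c d hcd' b.1 (le_trans hwc hwb) h2,
        Or.inr ⟨rfl, this⟩⟩
  · -- α = c.1, β = d.1
    rcases affine_endpoint k e c.1 d.1 w.1 hwc hwd hδ0 with hα | hβ
    · have : lineY a b c.1 ≤ c.2 := by
        have := hδ c.1; rw [lineY_self] at this; linarith
      exact Or.inl ⟨(c.1, lineY a b c.1), line_mem a b hab' c.1 h1 (le_trans hwc hwb),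
        Or.inl ⟨rfl, this⟩⟩
    · have : lineY a b d.1 ≤ d.2 := by
        have := hδ d.1; rw [lineY_other c d hcd'] at this; linarith
      exact Or.inl ⟨(d.1, lineY a b d.1), line_mem a b hab' d.1 (le_trans hwa hwd) h2,
        Or.inr ⟨rfl, this⟩⟩
  · -- α = a.1, β = b.1
    rcases affine_endpoint k e a.1 b.1 w.1 hwa hwb hδ0 with hα | hβ
    · have : a.2 ≤ lineY c d a.1 := by
        have := hδ a.1; rw [lineY_self] at this; linarith
      exact Or.inr ⟨(a.1, lineY c d a.1), line_mem c d hcd' a.1 h1 (le_trans hwa hwd),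
        Or.inl ⟨rfl, this⟩⟩
    · have : b.2 ≤ lineY c d b.1 := by
        have := hδ b.1; rw [lineY_other a b hab'] at this; linarith
      exact Or.inr ⟨(b.1, lineY c d b.1), line_mem c d hcd' b.1 (le_trans hwc hwb) h2,
        Or.inr ⟨rfl, this⟩⟩
  · -- α = a.1, β = d.1
    rcases affine_endpoint k e a.1 d.1 w.1 hwa hwd hδ0 with hα | hβ
    · have : a.2 ≤ lineY c d a.1 := by
        have := hδ a.1; rw [lineY_self] at this; linarith
      exact Or.inr ⟨(a.1, lineY c d a.1), line_mem c d hcd' a.1 h1 (le_trans hwa hwd),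
        Or.inl ⟨rfl, this⟩⟩
    · have : lineY a b d.1 ≤ d.2 := by
        have := hδ d.1; rw [lineY_other c d hcd'] at this; linarith
      exact Or.inl ⟨(d.1, lineY a b d.1), line_mem a b hab' d.1 (le_trans hwa hwd) h2,
        Or.inr ⟨rfl, this⟩⟩

lemma segB (a b c d w w' : ℝ × ℝ)
    (hw : w ∈ segment ℝ a b) (hw' : w' ∈ segment ℝ c d)
    (hx : w.1 = w'.1) (hy : w.2 ≤ w'.2) :
    (∃ z ∈ segment ℝ a b, (z.1 = c.1 ∧ z.2 ≤ c.2) ∨ (z.1 = d.1 ∧ z.2 ≤ d.2)) ∨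
    (∃ z ∈ segment ℝ c d, (z.1 = a.1 ∧ a.2 ≤ z.2) ∨ (z.1 = b.1 ∧ b.2 ≤ z.2)) := by
  rcases le_total a.1 b.1 with h1 | h1 <;> rcases le_total c.1 d.1 with h2 | h2
  · exact segB_sorted a b c d w w' h1 h2 hw hw' hx hy
  · have := segB_sorted a b d c w w' h1 h2 hw (by rwa [segment_symm]) hx hy
    rw [segment_symm ℝ d c] at this
    rcases this with ⟨z, hz, h⟩ | h
    · exact Or.inl ⟨z, hz, h.symm⟩
    · exact Or.inr h
  · have := segB_sorted b a c d w w' h1 h2 (by rwa [segment_symm]) hw' hx hy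
    rw [segment_symm ℝ b a] at this
    rcases this with h | ⟨z, hz, h⟩
    · exact Or.inl h
    · exact Or.inr ⟨z, hz, h.symm⟩
  · have := segB_sorted b a d c w w' h1 h2 (by rwa [segment_symm]) (by rwa [segment_symm]) hx hy
    rw [segment_symm ℝ b a, segment_symm ℝ d c] at this
    rcases this with ⟨z, hz, h⟩ | ⟨z, hz, h⟩
    · exact Or.inl ⟨z, hz, h.symm⟩
    · exact Or.inr ⟨z, hz, h.symm⟩

lemma core (N : ℕ) : ∀ (s t : Finset (ℝ × ℝ)) (u v : ℝ × ℝ),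
    s.card + t.card ≤ N →
    u ∈ convexHull ℝ (s : Set (ℝ × ℝ)) → v ∈ convexHull ℝ (t : Set (ℝ × ℝ)) →
    u.1 = v.1 → u.2 ≤ v.2 →
    (∃ q ∈ t, ∃ w ∈ convexHull ℝ (s : Set (ℝ × ℝ)), w.1 = q.1 ∧ w.2 ≤ q.2) ∨
    (∃ p ∈ s, ∃ w ∈ convexHull ℝ (t : Set (ℝ × ℝ)), w.1 = p.1 ∧ p.2 ≤ w.2) := by
  induction N with
  | zero =>
    intro s t u v hcard hu hv hx hy
    have : s = ∅ := Finset.card_eq_zero.mp (by omega)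
    subst this
    simp at hu
  | succ N ih =>
    intro s t u v hcard hu hv hx hy
    have hs : s.Nonempty := by
      rw [Finset.nonempty_iff_ne_empty]
      rintro rfl
      simp at hu
    have ht : t.Nonempty := by
      rw [Finset.nonempty_iff_ne_empty]
      rintro rfl
      simp at hv
    rcases eq_or_lt_of_le (Nat.succ_le_of_lt (Finset.Nonempty.card_pos hs)) with hs1 | hs1
    · -- s.card = 1
      obtain ⟨p, hp⟩ := Finset.card_eq_one.mp hs1.symm
      subst hp
      have : u = p := by simpa using hu
      exact Or.inr ⟨p, by simp, v, hv, by rw [← hx, this], by rw [← this]; exact hy⟩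
    rcases eq_or_lt_of_le (Nat.succ_le_of_lt (Finset.Nonempty.card_pos ht)) with ht1 | ht1
    · obtain ⟨q, hq⟩ := Finset.card_eq_one.mp ht1.symm
      subst hq
      have : v = q := by simpa using hv
      exact Or.inl ⟨q, by simp, u, hu, by rw [hx, this], by rw [← this]; exact hy⟩
    -- both cards ≥ 2
    obtain ⟨p, hp⟩ := hs
    obtain ⟨q, hq⟩ := ht
    set s' := s.erase p with hs'def
    set t' := t.erase q with ht'def
    have hs'card : s'.card = s.card - 1 := Finset.card_erase_of_mem hp
    have ht'card : t'.card = t.card - 1 := Finset.card_erase_of_mem hq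
    have hs'ne : s'.Nonempty := Finset.card_pos.mp (by omega)
    have ht'ne : t'.Nonempty := Finset.card_pos.mp (by omega)
    have hscoe : (↑s : Set (ℝ × ℝ)) = insert p ↑s' := by
      rw [← Finset.coe_insert, Finset.insert_erase hp]
    have htcoe : (↑t : Set (ℝ × ℝ)) = insert q ↑t' := by
      rw [← Finset.coe_insert, Finset.insert_erase hq]
    rw [hscoe, convexHull_insert (by exact_mod_cast hs'ne), mem_convexJoin] at hu
    obtain ⟨p0, hp0, u', hu', huseg⟩ := hu
    rw [Set.mem_singleton_iff] at hp0
    subst hp0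
    rw [htcoe, convexHull_insert (by exact_mod_cast ht'ne), mem_convexJoin] at hv
    obtain ⟨q0, hq0, v', hv', hvseg⟩ := hv
    rw [Set.mem_singleton_iff] at hq0
    subst hq0
    have hssub : segment ℝ p0 u' ⊆ convexHull ℝ (↑s : Set (ℝ × ℝ)) :=
      (convex_convexHull ℝ _).segment_subset (subset_convexHull ℝ _ (by exact_mod_cast hp))
        (convexHull_mono (Finset.coe_subset.2 (Finset.erase_subset _ _)) hu')
    have htsub : segment ℝ q0 v' ⊆ convexHull ℝ (↑t : Set (ℝ × ℝ)) :=
      (convex_convexHull ℝ _).segment_subset (subset_convexHull ℝ _ (by exact_mod_cast hq))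
        (convexHull_mono (Finset.coe_subset.2 (Finset.erase_subset _ _)) hv')
    have hs'sub : convexHull ℝ (↑s' : Set (ℝ × ℝ)) ⊆ convexHull ℝ (↑s : Set (ℝ × ℝ)) :=
      convexHull_mono (Finset.coe_subset.2 (Finset.erase_subset _ _))
    have ht'sub : convexHull ℝ (↑t' : Set (ℝ × ℝ)) ⊆ convexHull ℝ (↑t : Set (ℝ × ℝ)) :=
      convexHull_mono (Finset.coe_subset.2 (Finset.erase_subset _ _))
    rcases segB p0 u' q0 v' u v huseg hvseg hx hy with ⟨z, hz, hcase⟩ | ⟨z, hz, hcase⟩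
    · rcases hcase with ⟨hz1, hz2⟩ | ⟨hz1, hz2⟩
      · -- z in conv s, below q0 : q0 ∈ t works
        exact Or.inl ⟨q0, hq, z, hssub hz, hz1, hz2⟩
      · -- z in conv s, z.1 = v'.1, z.2 ≤ v'.2 : recurse with (s, t')
        rcases ih s t' z v' (by omega) (hssub hz) hv' hz1 hz2 with ⟨q1, hq1, w, hw, h⟩ | ⟨p1, hp1, w, hw, h⟩
        · exact Or.inl ⟨q1, Finset.erase_subset _ _ hq1, w, hw, h⟩
        · exact Or.inr ⟨p1, hp1, w, ht'sub hw, h⟩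
    · rcases hcase with ⟨hz1, hz2⟩ | ⟨hz1, hz2⟩
      · exact Or.inr ⟨p0, hp, z, htsub hz, hz1, hz2⟩
      · rcases ih s' t u' z (by omega) hu' (htsub hz) hz1.symm hz2 with ⟨q1, hq1, w, hw, h⟩ | ⟨p1, hp1, w, hw, h⟩
        · exact Or.inl ⟨q1, hq1, w, hs'sub hw, h⟩
        · exact Or.inr ⟨p1, Finset.erase_subset _ _ hp1, w, hw, h⟩


/-- If the lower hull of `P_L` and the upper hull of `P_U` intersect, then a point
of `P_U` lies in the lower hull of `P_L` or a point of `P_L` lies in the upper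
hull of `P_U`. -/
theorem hulls_intersect_point_in_hull
    (PL PU : Set (ℝ × ℝ)) (hPL : PL.Finite) (hPU : PU.Finite)
    (h : (lowhull PL ∩ uphull PU).Nonempty) :
    (∃ q ∈ PU, q ∈ lowhull PL) ∨ (∃ q ∈ PL, q ∈ uphull PU) := by
  obtain ⟨z, hzl, hzu⟩ := h
  obtain ⟨u, hu, hu1, hu2⟩ := (low_mem PL z).mp hzl
  obtain ⟨v, hv, hv1, hv2⟩ := (up_mem PU z).mp hzu
  have hcoeL : ((hPL.toFinset : Finset (ℝ × ℝ)) : Set (ℝ × ℝ)) = PL := hPL.coe_toFinset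
  have hcoeU : ((hPU.toFinset : Finset (ℝ × ℝ)) : Set (ℝ × ℝ)) = PU := hPU.coe_toFinset
  have hu' : u ∈ convexHull ℝ ((hPL.toFinset : Finset (ℝ × ℝ)) : Set (ℝ × ℝ)) := by
    rw [hcoeL]; exact hu
  have hv' : v ∈ convexHull ℝ ((hPU.toFinset : Finset (ℝ × ℝ)) : Set (ℝ × ℝ)) := by
    rw [hcoeU]; exact hv
  rcases core (hPL.toFinset.card + hPU.toFinset.card) hPL.toFinset hPU.toFinset u v le_rfl
      hu' hv' (by rw [hu1, hv1]) (le_trans hu2 hv2) with ⟨q, hq, w, hw, h1, h2⟩ | ⟨p, hp, w, hw, h1, h2⟩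
  · rw [hcoeL] at hw
    exact Or.inl ⟨q, by rwa [← hPU.mem_toFinset], (low_mem PL q).mpr ⟨w, hw, h1, h2⟩⟩
  · rw [hcoeU] at hw
    exact Or.inr ⟨p, by rwa [← hPL.mem_toFinset], (up_mem PU p).mpr ⟨w, hw, h1, h2⟩⟩
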